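/- Every finitely generated commutative semigroup is strongly Markov: for every finite alphabet A and every map φ : A → S with induced map φ⁺ on nonempty words surjective, there exists a robust semigroup Markov language for S over A. -/

import Mathlib

open Function

/-- A language is regular if it is accepted by a deterministic finite automaton
with a finite state set. -/
def RegularLang {A : Type} (L : Language A) : Prop :=
  ∃ (Q : Type) (_ : Fintype Q) (M : DFA A Q), M.accepts = L

/-- The product of a nonempty word under the letter-assignment `φ`; the empty
word is sent to `none`. This is the induced map `φ⁺` on nonempty words. -/
def prodPlus {A S : Type} [Semigroup S] (φ : A → S) : List A → Option S
  | [] => none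
  | a :: w => some (w.foldl (fun s b => s * φ b) (φ a))

/-- The induced monoid homomorphism `φ*` from the free monoid of words. -/
def monProd {A M : Type} [Monoid M] (φ : A → M) (w : List A) : M :=
  (w.map φ).prod

/-- A semigroup Markov language for `S` over `A` (with respect to `φ`): a regular,
`+`-prefix-closed language of nonempty words mapping bijectively onto `S` under `φ⁺`. -/
structure IsSgMarkovLang {A S : Type} [Semigroup S] (φ : A → S) (L : Language A) : Prop where
  regular : RegularLang L
  not_empty_mem : [] ∉ L
  plus_prefix_closed : ∀ u v : List A, u ≠ [] → v ≠ [] → u ++ v ∈ L → u ∈ L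
  unique_rep : ∀ s : S, ∃! w : List A, w ∈ L ∧ prodPlus φ w = some s

/-- A robust semigroup Markov language: additionally every word of `L` has minimal
length among (nonempty) words representing the same element. -/
structure IsRobustSgMarkovLang {A S : Type} [Semigroup S] (φ : A → S) (L : Language A)
    extends IsSgMarkovLang φ L : Prop where
  min_length : ∀ w ∈ L, ∀ v : List A, prodPlus φ v = prodPlus φ w → w.length ≤ v.length

/-- A monoid Markov language for `M` over `A` (with respect to `φ`): a regular,
prefix-closed language mapping bijectively onto `M` under `φ*`. -/
structure IsMonMarkovLang {A M : Type} [Monoid M] (φ : A → M) (L : Language A) : Prop where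
  regular : RegularLang L
  prefix_closed : ∀ u v : List A, u ++ v ∈ L → u ∈ L
  unique_rep : ∀ m : M, ∃! w : List A, w ∈ L ∧ monProd φ w = m

/-- A robust monoid Markov language: additionally every word of `L` has minimal
length among words representing the same element. -/
structure IsRobustMonMarkovLang {A M : Type} [Monoid M] (φ : A → M) (L : Language A)
    extends IsMonMarkovLang φ L : Prop where
  min_length : ∀ w ∈ L, ∀ v : List A, monProd φ v = monProd φ w → w.length ≤ v.length

/-- `S` is Markov as a semigroup. -/
def SgMarkov (S : Type) [Semigroup S] : Prop :=
  ∃ (A : Type) (_ : Fintype A) (φ : A → S),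
    (∀ s : S, ∃ w : List A, prodPlus φ w = some s) ∧
    ∃ L : Language A, IsSgMarkovLang φ L

/-- `S` is robustly Markov (as a semigroup) with respect to some alphabet. -/
def SgRobustlyMarkov (S : Type) [Semigroup S] : Prop :=
  ∃ (A : Type) (_ : Fintype A) (φ : A → S),
    (∀ s : S, ∃ w : List A, prodPlus φ w = some s) ∧
    ∃ L : Language A, IsRobustSgMarkovLang φ L

/-- `S` is strongly Markov (as a semigroup). -/
def SgStronglyMarkov (S : Type) [Semigroup S] : Prop :=
  ∀ (A : Type) [Fintype A] (φ : A → S),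
    (∀ s : S, ∃ w : List A, prodPlus φ w = some s) →
    ∃ L : Language A, IsRobustSgMarkovLang φ L

/-- `M` is Markov as a monoid. -/
def MonMarkov (M : Type) [Monoid M] : Prop :=
  ∃ (A : Type) (_ : Fintype A) (φ : A → M),
    Surjective (monProd φ) ∧ ∃ L : Language A, IsMonMarkovLang φ L

/-- `M` is robustly Markov (as a monoid) with respect to some alphabet. -/
def MonRobustlyMarkov (M : Type) [Monoid M] : Prop :=
  ∃ (A : Type) (_ : Fintype A) (φ : A → M),
    Surjective (monProd φ) ∧ ∃ L : Language A, IsRobustMonMarkovLang φ L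

/-- `M` is strongly Markov (as a monoid). -/
def MonStronglyMarkov (M : Type) [Monoid M] : Prop :=
  ∀ (A : Type) [Fintype A] (φ : A → M),
    Surjective (monProd φ) →
    ∃ L : Language A, IsRobustMonMarkovLang φ L

set_option linter.unusedSectionVars false

namespace SgMarkovAux
open List

variable {S A : Type} [CommSemigroup S] [Fintype A] [LinearOrder A]

/-! ### The monoid extension and the bridge to `prodPlus` -/

def P (φ : A → S) (w : List A) : WithOne S := (w.map fun a => ((φ a : WithOne S))).prod

lemma P_append (φ : A → S) (u v : List A) : P φ (u ++ v) = P φ u * P φ v := by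
  simp [P]

lemma foldl_coe (φ : A → S) (w : List A) (x : S) :
    ((w.foldl (fun s b => s * φ b) x : S) : WithOne S) = (x : WithOne S) * P φ w := by
  induction w generalizing x with
  | nil => simp [P]
  | cons a w ih => simp only [foldl_cons, ih, P, map_cons, prod_cons, WithOne.coe_mul, mul_assoc]

lemma prodPlus_iff (φ : A → S) {w : List A} (hw : w ≠ []) (s : S) :
    prodPlus φ w = some s ↔ P φ w = (s : WithOne S) := by
  cases w with
  | nil => exact absurd rfl hw
  | cons a w =>
    have h : ((w.foldl (fun s b => s * φ b) (φ a) : S) : WithOne S) = P φ (a :: w) := by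
      rw [foldl_coe]; simp [P]
    constructor
    · rintro h'
      have h2 : w.foldl (fun s b => s * φ b) (φ a) = s := by
        simpa [prodPlus] using h'
      rw [← h, h2]
    · intro h'
      rw [h'] at h
      simp [prodPlus, WithOne.coe_inj.mp h]

lemma prodPlus_exists (φ : A → S) {w : List A} (hw : w ≠ []) : ∃ t : S, prodPlus φ w = some t := by
  cases w with
  | nil => exact absurd rfl hw
  | cons a w => exact ⟨_, rfl⟩

lemma prodPlus_ne_nil (φ : A → S) {w : List A} {s : S} (h : prodPlus φ w = some s) : w ≠ [] := by
  rintro rfl; simp [prodPlus] at h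

lemma P_perm (φ : A → S) {u v : List A} (h : u ~ v) : P φ u = P φ v :=
  (h.map _).prod_eq

/-! ### Counts, totals and sorted words -/

def cnt (w : List A) : A → ℕ := fun a => w.count a

def lA : List A := Finset.univ.sort (· ≤ ·)

lemma mem_lA (a : A) : a ∈ (lA : List A) := (Finset.mem_sort _).2 (Finset.mem_univ a)

lemma nodup_lA : (lA : List A).Nodup := Finset.sort_nodup _ _

lemma sorted_lt_lA : (lA : List A).Pairwise (· < ·) := (Finset.sortedLT_sort _).pairwise

def tot (c : A → ℕ) : ℕ := ((lA : List A).map c).sum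

lemma list_sum_map_add (l : List A) (f g : A → ℕ) :
    (l.map fun x => f x + g x).sum = (l.map f).sum + (l.map g).sum := by
  induction l with
  | nil => simp
  | cons a l ih => simp [ih]; omega

lemma sum_map_ite (k : A → ℕ) (a : A) :
    ∀ {l : List A}, l.Nodup → a ∈ l → (l.map fun b => if b = a then k b else 0).sum = k a := by
  intro l
  induction l with
  | nil => simp
  | cons b l ih =>
    intro hnd hmem
    rcases List.mem_cons.1 hmem with rfl | hmem
    · have hz : ∀ x ∈ l.map fun b => if b = a then k b else 0, x = 0 := by
        intro x hx
        obtain ⟨b', hb', rfl⟩ := List.mem_map.1 hx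
        have : b' ≠ a := fun h => (List.nodup_cons.1 hnd).1 (h ▸ hb')
        simp [this]
      simp [List.sum_eq_zero hz]
    · have hba : b ≠ a := fun h => (List.nodup_cons.1 hnd).1 (h ▸ hmem)
      simp only [map_cons, sum_cons, if_neg hba, ih (List.nodup_cons.1 hnd).2 hmem, zero_add]

lemma tot_add (c d : A → ℕ) : tot (c + d) = tot c + tot d := by
  have h : ((lA : List A).map fun x => c x + d x) = (lA : List A).map (c + d) := rfl
  rw [tot, ← h, list_sum_map_add]; rfl

lemma tot_eq_zero {c : A → ℕ} : tot c = 0 ↔ c = 0 := by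
  constructor
  · intro h
    funext a
    have := List.sum_eq_zero_iff.1 h (c a) (List.mem_map.2 ⟨a, mem_lA a, rfl⟩)
    simpa using this
  · rintro rfl
    simp [tot, List.sum_eq_zero_iff]

lemma cnt_append (u v : List A) : cnt (u ++ v) = cnt u + cnt v := by
  funext a; simp [cnt, List.count_append]

lemma cnt_cons (a : A) (w : List A) :
    cnt (a :: w) = cnt w + fun b => if b = a then 1 else 0 := by
  funext b
  simp only [cnt, List.count_cons, Pi.add_apply]
  by_cases h : b = a
  · simp [h]
  · simp [h, show ¬ a = b from fun hh => h hh.symm]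

lemma tot_cnt (w : List A) : tot (cnt w) = w.length := by
  induction w with
  | nil =>
    have h0 : cnt ([] : List A) = 0 := by funext a; simp [cnt]
    simp [h0, tot_eq_zero.2 rfl]
  | cons a w ih =>
    rw [cnt_cons, tot_add, ih]
    have h1 : tot (fun b => if b = a then 1 else 0) = 1 := by
      simpa [tot] using sum_map_ite (fun _ => 1) a nodup_lA (mem_lA a)
    simp [h1]

lemma cnt_eq_zero {w : List A} : cnt w = 0 ↔ w = [] := by
  constructor
  · intro h
    have h2 := tot_cnt w
    rw [h, tot_eq_zero.2 rfl] at h2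
    exact List.length_eq_zero_iff.1 h2.symm
  · rintro rfl; funext a; simp [cnt]

lemma perm_of_cnt_eq {u v : List A} (h : cnt u = cnt v) : u ~ v :=
  List.perm_iff_count.2 fun a => congrFun h a

def sw (c : A → ℕ) : List A := ((lA : List A).map fun a => List.replicate (c a) a).flatten

lemma cnt_sw (c : A → ℕ) : cnt (sw c) = c := by
  funext a
  have h1 : cnt (sw c) a = ((lA : List A).map fun b => if b = a then c b else 0).sum := by
    simp only [cnt, sw, List.count_flatten, List.map_map]
    congr 1
    refine List.map_congr_left fun b _ => ?_
    simp [Function.comp, List.count_replicate]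
  rw [h1, sum_map_ite c a nodup_lA (mem_lA a)]

lemma len_sw (c : A → ℕ) : (sw c).length = tot c := by
  simp only [sw, List.length_flatten, List.map_map, tot]
  congr 1
  refine List.map_congr_left fun b _ => ?_
  simp

end SgMarkovAux

namespace SgMarkovAux
open List

variable {S A : Type} [CommSemigroup S] [Fintype A] [LinearOrder A]

lemma sorted_sw (c : A → ℕ) : (sw c).Pairwise (· ≤ ·) := by
  rw [sw, List.pairwise_flatten]
  refine ⟨?_, ?_⟩
  · intro l hl
    obtain ⟨a, _, rfl⟩ := List.mem_map.1 hl
    exact List.pairwise_replicate.2 (Or.inr le_rfl)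
  · rw [List.pairwise_map]
    refine (sorted_lt_lA (A := A)).imp ?_
    intro a b hab x hx y hy
    rw [List.eq_of_mem_replicate hx, List.eq_of_mem_replicate hy]
    exact le_of_lt hab

lemma sw_cnt_of_sorted {w : List A} (h : w.Pairwise (· ≤ ·)) : sw (cnt w) = w :=
  List.Perm.eq_of_pairwise' (sorted_sw _) h (perm_of_cnt_eq (cnt_sw _))

lemma sw_eq_nil {c : A → ℕ} : sw c = [] ↔ c = 0 := by
  rw [← List.length_eq_zero_iff, len_sw, tot_eq_zero]

lemma P_sw_add (φ : A → S) (c d : A → ℕ) :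
    P φ (sw (c + d)) = P φ (sw c) * P φ (sw d) := by
  rw [← P_append]
  refine P_perm φ (perm_of_cnt_eq ?_)
  rw [cnt_sw, cnt_append, cnt_sw, cnt_sw]

/-! ### The order on count vectors -/

def LTc (c c' : A → ℕ) : Prop := tot c < tot c' ∨ (tot c = tot c' ∧ toLex c < toLex c')

lemma toLex_add_lt {c c' : A → ℕ} (h : toLex c < toLex c') (f : A → ℕ) :
    toLex (c + f) < toLex (c' + f) := by
  obtain ⟨i, hji, hi⟩ := h
  exact ⟨i, fun j hj => by simpa using congrArg (· + f j) (hji j hj), by simpa using hi⟩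

lemma LTc_add {c c' : A → ℕ} (h : LTc c c') (f : A → ℕ) : LTc (c + f) (c' + f) := by
  rcases h with h | ⟨h1, h2⟩
  · exact Or.inl (by rw [tot_add, tot_add]; omega)
  · exact Or.inr ⟨by rw [tot_add, tot_add, h1], toLex_add_lt h2 f⟩

/-! ### Minimal representatives -/

variable (φ : A → S)

def RepC (s : S) : Set (A → ℕ) := {c | c ≠ 0 ∧ P φ (sw c) = (s : WithOne S)}

variable (hs : ∀ s : S, ∃ w : List A, prodPlus φ w = some s)

include hs

lemma RepC_nonempty (s : S) : (RepC φ s).Nonempty := by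
  obtain ⟨w, hw⟩ := hs s
  have hne : w ≠ [] := prodPlus_ne_nil φ hw
  refine ⟨cnt w, ?_, ?_⟩
  · simpa [cnt_eq_zero] using hne
  · rw [P_perm φ (perm_of_cnt_eq (cnt_sw (cnt w)))]
    exact (prodPlus_iff φ hne s).1 hw

noncomputable def Nn (s : S) : ℕ := sInf (tot '' RepC φ s)

def Dset (s : S) : Set (A → ℕ) := {c | c ∈ RepC φ s ∧ tot c = Nn φ s}

lemma Dset_nonempty (s : S) : (Dset φ s).Nonempty := by
  have : Nn φ s ∈ tot '' RepC φ s :=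
    Nat.sInf_mem ((RepC_nonempty φ hs s).image tot)
  obtain ⟨c, hc, hct⟩ := this
  exact ⟨c, hc, hct⟩

omit hs in
lemma Dset_finite (s : S) : (Dset φ s).Finite := by
  have hsub : Dset φ s ⊆ Set.pi Set.univ (fun _ : A => Set.Iic (Nn φ s)) := by
    rintro c ⟨_, hct⟩ a _
    have : c a ≤ tot c :=
      List.single_le_sum (l := (lA : List A).map c) (fun x _ => Nat.zero_le x) _
        (List.mem_map.2 ⟨a, mem_lA a, rfl⟩)
    simpa [hct] using this.trans_eq hct
  exact (Set.Finite.pi fun _ => Set.finite_Iic _).subset hsub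

omit hs in
lemma Nn_le {s : S} {c : A → ℕ} (hc : c ∈ RepC φ s) : Nn φ s ≤ tot c :=
  Nat.sInf_le ⟨c, hc, rfl⟩

noncomputable def cmin (s : S) : A → ℕ :=
  Classical.choose (Set.exists_min_image (Dset φ s) toLex (Dset_finite φ s) (Dset_nonempty φ hs s))

lemma cmin_spec (s : S) :
    cmin φ hs s ∈ Dset φ s ∧ ∀ c ∈ Dset φ s, toLex (cmin φ hs s) ≤ toLex c := by
  have h := Classical.choose_spec
    (Set.exists_min_image (Dset φ s) toLex (Dset_finite φ s) (Dset_nonempty φ hs s))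
  exact ⟨h.1, h.2⟩

lemma cmin_mem (s : S) : cmin φ hs s ∈ RepC φ s := (cmin_spec φ hs s).1.1

lemma cmin_tot (s : S) : tot (cmin φ hs s) = Nn φ s := (cmin_spec φ hs s).1.2

lemma cmin_tri {s : S} {c : A → ℕ} (hc : c ∈ RepC φ s) :
    c = cmin φ hs s ∨ LTc (cmin φ hs s) c := by
  rcases lt_or_eq_of_le (cmin_tot φ hs s ▸ Nn_le φ hc) with h | h
  · exact Or.inr (Or.inl h)
  · rcases eq_or_ne (toLex (cmin φ hs s)) (toLex c) with he | hne
    · exact Or.inl (toLex.injective he).symm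
    · refine Or.inr (Or.inr ⟨h, lt_of_le_of_ne ((cmin_spec φ hs s).2 c ⟨hc, ?_⟩) hne⟩)
      rw [← h, cmin_tot φ hs s]

lemma not_LTc_cmin {s : S} {c : A → ℕ} (hc : c ∈ RepC φ s) : ¬ LTc c (cmin φ hs s) := by
  rintro (h | ⟨h1, h2⟩)
  · exact absurd (cmin_tot φ hs s ▸ Nn_le φ hc) (by omega)
  · have : toLex (cmin φ hs s) ≤ toLex c :=
      (cmin_spec φ hs s).2 c ⟨hc, h1.trans (cmin_tot φ hs s)⟩
    exact absurd h2 (not_lt.2 this)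

lemma cmin_ne_zero (s : S) : cmin φ hs s ≠ 0 := (cmin_mem φ hs s).1

/-! ### The normal form and the language -/

noncomputable def nf (s : S) : List A := sw (cmin φ hs s)

def Lng : Language A := {w | ∃ s : S, nf φ hs s = w}

lemma nf_ne_nil (s : S) : nf φ hs s ≠ [] := by
  rw [nf, Ne, sw_eq_nil]
  exact cmin_ne_zero φ hs s

lemma nf_sorted (s : S) : (nf φ hs s).Pairwise (· ≤ ·) := sorted_sw _

lemma nf_prodPlus (s : S) : prodPlus φ (nf φ hs s) = some s :=
  (prodPlus_iff φ (nf_ne_nil φ hs s) s).2 (cmin_mem φ hs s).2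

lemma cnt_nf (s : S) : cnt (nf φ hs s) = cmin φ hs s := cnt_sw _

end SgMarkovAux

namespace SgMarkovAux
open List

variable {S A : Type} [CommSemigroup S] [Fintype A] [LinearOrder A]
variable (φ : A → S)

lemma cnt_mem_RepC {v : List A} {s : S} (h : prodPlus φ v = some s) : cnt v ∈ RepC φ s := by
  have hne : v ≠ [] := prodPlus_ne_nil φ h
  refine ⟨by simpa [cnt_eq_zero] using hne, ?_⟩
  rw [P_perm φ (perm_of_cnt_eq (cnt_sw (cnt v)))]
  exact (prodPlus_iff φ hne s).1 h

variable (hs : ∀ s : S, ∃ w : List A, prodPlus φ w = some s)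
include hs

lemma Lng_not_empty_mem : [] ∉ Lng φ hs := by
  rintro ⟨s, h⟩
  exact nf_ne_nil φ hs s h

lemma Lng_unique_rep (s : S) :
    ∃! w : List A, w ∈ Lng φ hs ∧ prodPlus φ w = some s := by
  refine ⟨nf φ hs s, ⟨⟨s, rfl⟩, nf_prodPlus φ hs s⟩, ?_⟩
  rintro w ⟨⟨s', rfl⟩, hp⟩
  have h2 := nf_prodPlus φ hs s'
  rw [hp] at h2
  obtain rfl : s' = s := by simpa using h2.symm
  rfl

lemma Lng_min_length : ∀ w ∈ Lng φ hs, ∀ v : List A,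
    prodPlus φ v = prodPlus φ w → w.length ≤ v.length := by
  rintro w ⟨s, rfl⟩ v hv
  rw [nf_prodPlus φ hs s] at hv
  have hc : cnt v ∈ RepC φ s := cnt_mem_RepC φ hv
  have h1 : (nf φ hs s).length = Nn φ s := by
    rw [nf, len_sw, cmin_tot φ hs s]
  have h2 : Nn φ s ≤ tot (cnt v) := Nn_le φ hc
  rw [tot_cnt] at h2
  omega

lemma Lng_prefix_closed : ∀ u v : List A, u ≠ [] → v ≠ [] → u ++ v ∈ Lng φ hs →
    u ∈ Lng φ hs := by
  rintro u v hu hv ⟨s, hsw⟩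
  have hu_sorted : u.Pairwise (· ≤ ·) := by
    have := nf_sorted φ hs s
    rw [hsw] at this
    exact this.sublist (List.sublist_append_left u v)
  obtain ⟨t, ht⟩ := prodPlus_exists φ hu
  have hcu : cnt u ∈ RepC φ t := cnt_mem_RepC φ ht
  rcases cmin_tri φ hs hcu with heq | hlt
  · refine ⟨t, ?_⟩
    rw [nf, ← heq, sw_cnt_of_sorted hu_sorted]
  · exfalso
    set f := cnt v with hf
    have hmem : cmin φ hs t + f ∈ RepC φ s := by
      constructor
      · intro h0
        apply cmin_ne_zero φ hs t
        funext a
        have := congrFun h0 a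
        simp only [Pi.add_apply, Pi.zero_apply] at this ⊢
        omega
      · have e1 : P φ (sw (cmin φ hs t + f)) = P φ (sw (cmin φ hs t)) * P φ (sw f) :=
          P_sw_add φ _ _
        have e2 : P φ (sw (cmin φ hs t)) = (t : WithOne S) := (cmin_mem φ hs t).2
        have e3 : P φ (sw f) = P φ v := P_perm φ (perm_of_cnt_eq (cnt_sw f))
        have e4 : (t : WithOne S) = P φ u := ((prodPlus_iff φ hu t).1 ht).symm
        have e5 : P φ (u ++ v) = (s : WithOne S) := by
          rw [← hsw]
          exact (cmin_mem φ hs s).2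
        rw [e1, e2, e3, e4, ← P_append, e5]
    have h2 : LTc (cmin φ hs t + f) (cnt u + f) := LTc_add hlt f
    have h3 : cnt u + f = cmin φ hs s := by
      rw [hf, ← cnt_append, ← hsw, cnt_nf]
    rw [h3] at h2
    exact not_LTc_cmin φ hs hmem h2
end SgMarkovAux

namespace SgMarkovAux
open List

variable {S A : Type} [CommSemigroup S] [Fintype A] [LinearOrder A]
variable (φ : A → S) (hs : ∀ s : S, ∃ w : List A, prodPlus φ w = some s)

def C0 : Set (A → ℕ) := Set.range (cmin φ hs)

include hs in
lemma C0_down {c c' : A → ℕ} (hc' : c' ∈ C0 φ hs) (hc0 : c ≠ 0) (hle : c ≤ c') :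
    c ∈ C0 φ hs := by
  obtain ⟨s', hs'⟩ := hc'
  have hwne : sw c ≠ [] := fun h => hc0 (sw_eq_nil.1 h)
  obtain ⟨t, ht⟩ := prodPlus_exists φ hwne
  have hcRep : c ∈ RepC φ t := ⟨hc0, (prodPlus_iff φ hwne t).1 ht⟩
  rcases cmin_tri φ hs hcRep with heq | hlt
  · exact ⟨t, heq.symm⟩
  · exfalso
    set f : A → ℕ := fun a => c' a - c a with hf
    have hcf : c + f = c' := by
      funext a
      have h1 : c a ≤ c' a := hle a
      show c a + (c' a - c a) = c' a
      omega
    have hmem : cmin φ hs t + f ∈ RepC φ s' := by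
      constructor
      · intro h0
        apply cmin_ne_zero φ hs t
        funext a
        have := congrFun h0 a
        simp only [Pi.add_apply, Pi.zero_apply] at this ⊢
        omega
      · have e1 : P φ (sw (cmin φ hs t + f)) = P φ (sw (cmin φ hs t)) * P φ (sw f) :=
          P_sw_add φ _ _
        have e2 : P φ (sw (cmin φ hs t)) = (t : WithOne S) := (cmin_mem φ hs t).2
        have e3 : (t : WithOne S) = P φ (sw c) := ((prodPlus_iff φ hwne t).1 ht).symm
        have e4 : P φ (sw c) * P φ (sw f) = P φ (sw (c + f)) := (P_sw_add φ _ _).symm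
        rw [e1, e2, e3, e4, hcf, ← hs']
        exact (cmin_mem φ hs s').2
    have h2 : LTc (cmin φ hs t + f) (c + f) := LTc_add hlt f
    rw [hcf, ← hs'] at h2
    exact not_LTc_cmin φ hs hmem h2

def Uset : Set (A → ℕ) := {c | c ≠ 0 ∧ c ∉ C0 φ hs}

include hs in
lemma Uset_up {c c' : A → ℕ} (hc : c ∈ Uset φ hs) (hle : c ≤ c') : c' ∈ Uset φ hs := by
  have h0 : c' ≠ 0 := by
    intro h
    apply hc.1
    funext a
    have := hle a
    rw [h] at this
    simpa using this
  exact ⟨h0, fun hC => hc.2 (C0_down φ hs hC hc.1 hle)⟩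

def MinU : Set (A → ℕ) := {m | m ∈ Uset φ hs ∧ ∀ x ∈ Uset φ hs, x ≤ m → x = m}

lemma tot_le_of_le {c d : A → ℕ} (h : c ≤ d) : tot c ≤ tot d :=
  List.sum_le_sum fun a _ => h a

lemma eq_of_le_of_tot_eq {c d : A → ℕ} (h : c ≤ d) (ht : tot c = tot d) : c = d := by
  have key : ∀ l : List A, (∀ a ∈ l, c a ≤ d a) → (l.map c).sum = (l.map d).sum →
      ∀ a ∈ l, c a = d a := by
    intro l
    induction l with
    | nil => intro _ _ a ha; exact absurd ha List.not_mem_nil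
    | cons b l ih =>
      intro hle hsum a ha
      have h1 : (l.map c).sum ≤ (l.map d).sum :=
        List.sum_le_sum fun x hx => hle x (List.mem_cons_of_mem b hx)
      have h2 : c b ≤ d b := hle b List.mem_cons_self
      simp only [map_cons, sum_cons] at hsum
      have h3 : c b = d b := by omega
      have h4 : (l.map c).sum = (l.map d).sum := by omega
      rcases List.mem_cons.1 ha with rfl | ha
      · exact h3
      · exact ih (fun x hx => hle x (List.mem_cons_of_mem b hx)) h4 a ha
  funext a
  exact key (lA : List A) (fun x _ => h x) ht a (mem_lA a)

include hs in
lemma exists_minU : ∀ c ∈ Uset φ hs, ∃ m ∈ MinU φ hs, m ≤ c := by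
  suffices H : ∀ n : ℕ, ∀ c, tot c = n → c ∈ Uset φ hs → ∃ m ∈ MinU φ hs, m ≤ c from
    fun c hc => H (tot c) c rfl hc
  intro n
  induction n using Nat.strong_induction_on with
  | _ n ih =>
    intro c hn hc
    by_cases hmin : ∀ x ∈ Uset φ hs, x ≤ c → x = c
    · exact ⟨c, ⟨hc, hmin⟩, le_rfl⟩
    · push_neg at hmin
      obtain ⟨x, hx, hxle, hxne⟩ := hmin
      have hlt : tot x < tot c :=
        lt_of_le_of_ne (tot_le_of_le hxle) fun h => hxne (eq_of_le_of_tot_eq hxle h)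
      obtain ⟨m, hm, hmle⟩ := ih (tot x) (hn ▸ hlt) x rfl hx
      exact ⟨m, hm, hmle.trans hxle⟩

lemma pi_pwo (s : Set (A → ℕ)) : s.PartiallyWellOrderedOn (· ≤ ·) := by
  refine Set.partiallyWellOrderedOn_iff_exists_lt.2 ?_
  intro f hf
  obtain ⟨m, n, hmn, hle⟩ :=
    wellQuasiOrdered_le (α := A →₀ ℕ)
      (fun k => Finsupp.equivFunOnFinite.symm (f k))
  refine ⟨m, n, hmn, fun a => ?_⟩
  have := Finsupp.le_def.1 hle a
  simpa using this

lemma MinU_antichain : IsAntichain (· ≤ ·) (MinU φ hs) :=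
  fun _ hm _ hm' hne hle => hne (hm'.2 _ hm.1 hle)

lemma MinU_finite : (MinU φ hs).Finite :=
  (MinU_antichain φ hs).finite_of_partiallyWellOrderedOn (pi_pwo _)

noncomputable def Bb : ℕ :=
  ((MinU_finite φ hs).toFinset.sup fun m => Finset.univ.sup m) + 1

lemma Bb_pos : 0 < Bb φ hs := Nat.succ_pos _

lemma lt_Bb {m : A → ℕ} (hm : m ∈ MinU φ hs) (a : A) : m a < Bb φ hs :=
  Nat.lt_succ_of_le ((Finset.le_sup (Finset.mem_univ a)).trans
    (Finset.le_sup ((MinU_finite φ hs).mem_toFinset.2 hm)))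

noncomputable def capN (c : A → ℕ) : A → ℕ := fun a => min (c a) (Bb φ hs)

lemma capN_eq_zero {c : A → ℕ} : capN φ hs c = 0 ↔ c = 0 := by
  constructor
  · intro h
    funext a
    have h1 := congrFun h a
    have h2 := Bb_pos φ hs
    simp only [capN, Pi.zero_apply] at h1 ⊢
    omega
  · rintro rfl
    funext a
    simp [capN]

lemma le_capN_iff {m : A → ℕ} (hm : m ∈ MinU φ hs) {c : A → ℕ} :
    m ≤ capN φ hs c ↔ m ≤ c := by
  constructor <;> intro h a <;> have h1 := h a <;> have h2 := lt_Bb φ hs hm a <;>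
    simp only [capN] at h1 ⊢ <;> omega

include hs in
lemma mem_C0_iff {c : A → ℕ} :
    c ∈ C0 φ hs ↔ (c ≠ 0 ∧ ∀ m ∈ MinU φ hs, ¬ m ≤ c) := by
  constructor
  · intro hc
    obtain ⟨s, hsc⟩ := hc
    refine ⟨hsc ▸ cmin_ne_zero φ hs s, fun m hm hle => ?_⟩
    exact (Uset_up φ hs hm.1 hle).2 ⟨s, hsc⟩
  · rintro ⟨h0, hm⟩
    by_contra hnc
    obtain ⟨m, hmem, hmle⟩ := exists_minU φ hs c ⟨h0, hnc⟩
    exact hm m hmem hmle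

include hs in
lemma mem_C0_iff_cap {c : A → ℕ} :
    c ∈ C0 φ hs ↔ (capN φ hs c ≠ 0 ∧ ∀ m ∈ MinU φ hs, ¬ m ≤ capN φ hs c) := by
  rw [mem_C0_iff φ hs]
  constructor
  · rintro ⟨h0, hm⟩
    exact ⟨fun h => h0 ((capN_eq_zero φ hs).1 h), fun m hmem hle =>
      hm m hmem ((le_capN_iff φ hs hmem).1 hle)⟩
  · rintro ⟨h0, hm⟩
    exact ⟨fun h => h0 (by rw [h]; exact (capN_eq_zero φ hs).2 rfl), fun m hmem hle =>
      hm m hmem ((le_capN_iff φ hs hmem).2 hle)⟩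

end SgMarkovAux

namespace SgMarkovAux
open List

variable {S A : Type} [CommSemigroup S] [Fintype A] [LinearOrder A]
variable (φ : A → S) (hs : ∀ s : S, ∃ w : List A, prodPlus φ w = some s)

noncomputable def capF (c : A → ℕ) : A → Fin (Bb φ hs + 1) :=
  fun a => ⟨min (c a) (Bb φ hs), Nat.lt_succ_of_le (min_le_right _ _)⟩

noncomputable def bump (d : A → Fin (Bb φ hs + 1)) (a : A) : A → Fin (Bb φ hs + 1) :=
  fun a' => if a' = a then ⟨min ((d a : ℕ) + 1) (Bb φ hs), Nat.lt_succ_of_le (min_le_right _ _)⟩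
    else d a'

abbrev QQ := Option ((A → Fin (Bb φ hs + 1)) × Option A)

noncomputable def MM : DFA A (QQ φ hs) where
  step q a :=
    match q with
    | none => none
    | some (d, none) => some (bump φ hs d a, some a)
    | some (d, some b) => if b ≤ a then some (bump φ hs d a, some a) else none
  start := some (capF φ hs 0, none)
  accept := {q | ∃ dl : (A → Fin (Bb φ hs + 1)) × Option A, q = some dl ∧
    ((fun a => ((dl.1 a : ℕ))) ≠ 0 ∧ ∀ m ∈ MinU φ hs, ¬ m ≤ fun a => ((dl.1 a : ℕ)))}

lemma cnt_nil : cnt ([] : List A) = 0 := by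
  funext a; simp [cnt]

lemma cnt_singleton (a : A) : cnt [a] = fun b => if b = a then 1 else 0 := by
  rw [show [a] = a :: ([] : List A) from rfl, cnt_cons, cnt_nil, zero_add]

lemma bump_capF (c : A → ℕ) (a : A) :
    bump φ hs (capF φ hs c) a = capF φ hs (c + fun b => if b = a then 1 else 0) := by
  funext a'
  dsimp only [bump, capF, Pi.add_apply]
  by_cases h : a' = a
  · subst h
    rw [if_pos rfl]
    apply Fin.ext
    dsimp
    rw [if_pos rfl]
    omega
  · rw [if_neg h]
    apply Fin.ext
    dsimp
    rw [if_neg h]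
    omega

lemma capF_coe (c : A → ℕ) : (fun a => ((capF φ hs c a : ℕ))) = capN φ hs c := rfl

lemma eval_spec : ∀ w : List A,
    (w.Chain' (· ≤ ·) → (MM φ hs).eval w = some (capF φ hs (cnt w), w.getLast?)) ∧
    (¬ w.Chain' (· ≤ ·) → (MM φ hs).eval w = none) := by
  intro w
  induction w using List.reverseRecOn with
  | nil =>
    constructor
    · intro _
      rw [DFA.eval_nil, cnt_nil]
      rfl
    · intro h
      exact absurd List.isChain_nil h
  | append_singleton w a ih =>
    have heval : (MM φ hs).eval (w ++ [a]) = (MM φ hs).step ((MM φ hs).eval w) a :=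
      DFA.eval_append_singleton _ _ _
    have hchainIff : (w ++ [a]).Chain' (· ≤ ·) ↔
        w.Chain' (· ≤ ·) ∧ ∀ x ∈ w.getLast?, x ≤ a := by
      unfold List.Chain'
      rw [List.isChain_append]
      simp
    have hcnt : cnt (w ++ [a]) = cnt w + fun b => if b = a then 1 else 0 := by
      rw [cnt_append, cnt_singleton]
    have hgl : (w ++ [a]).getLast? = some a := List.getLast?_concat
    by_cases hw : w.Chain' (· ≤ ·)
    · by_cases hlast : ∀ x ∈ w.getLast?, x ≤ a
      · constructor
        · intro _
          rw [heval, ih.1 hw, hcnt, hgl, ← bump_capF]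
          cases hGL : w.getLast? with
          | none => rfl
          | some b =>
            have hba : b ≤ a := hlast b (by rw [hGL]; rfl)
            show (if b ≤ a then some (bump φ hs (capF φ hs (cnt w)) a, some a) else none) = _
            rw [if_pos hba]
        · intro hne
          exact absurd (hchainIff.2 ⟨hw, hlast⟩) hne
      · constructor
        · intro hch
          exact absurd (hchainIff.1 hch).2 hlast
        · intro _
          rw [heval, ih.1 hw]
          push_neg at hlast
          obtain ⟨b, hbmem, hba⟩ := hlast
          cases hGL : w.getLast? with
          | none => rw [hGL] at hbmem; exact absurd hbmem (by simp)
          | some b' =>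
            rw [hGL] at hbmem
            obtain rfl : b' = b := by simpa using hbmem
            show (if b' ≤ a then some (bump φ hs (capF φ hs (cnt w)) a, some a) else none) = none
            rw [if_neg (not_le.2 hba)]
    · have hnch : ¬ (w ++ [a]).Chain' (· ≤ ·) := fun h => hw (hchainIff.1 h).1
      refine ⟨fun h => absurd h hnch, fun _ => ?_⟩
      rw [heval, ih.2 hw]
      rfl

include hs in
lemma accepts_eq : (MM φ hs).accepts = Lng φ hs := by
  ext w
  rw [DFA.mem_accepts]
  by_cases hch : w.Chain' (· ≤ ·)
  · rw [(eval_spec φ hs w).1 hch]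
    have hsor : w.Pairwise (· ≤ ·) := List.isChain_iff_pairwise.1 hch
    constructor
    · rintro ⟨dl, heq, h0, hm⟩
      obtain rfl := Option.some_injective _ heq
      rw [capF_coe] at h0 hm
      obtain ⟨s, hcs⟩ := (mem_C0_iff_cap φ hs).2 ⟨h0, hm⟩
      exact ⟨s, by rw [nf, hcs, sw_cnt_of_sorted hsor]⟩
    · rintro ⟨s, rfl⟩
      refine ⟨(capF φ hs (cnt (nf φ hs s)), (nf φ hs s).getLast?), rfl, ?_⟩
      rw [capF_coe]
      exact (mem_C0_iff_cap φ hs).1 ⟨s, (cnt_nf φ hs s).symm⟩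
  · rw [(eval_spec φ hs w).2 hch]
    constructor
    · rintro ⟨dl, heq, _⟩
      exact absurd heq (by simp)
    · rintro ⟨s, rfl⟩
      exact absurd (List.isChain_iff_pairwise.2 (nf_sorted φ hs s)) hch

end SgMarkovAux

namespace SgMarkovAux
open List

variable {S A : Type} [CommSemigroup S] [Fintype A] [LinearOrder A]
variable (φ : A → S) (hs : ∀ s : S, ∃ w : List A, prodPlus φ w = some s)

include hs in
lemma Lng_regular : RegularLang (Lng φ hs) :=
  ⟨QQ φ hs, inferInstance, MM φ hs, accepts_eq φ hs⟩

end SgMarkovAux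

/-- Every finitely generated commutative semigroup is strongly Markov. -/
theorem stmt12 {S : Type} [CommSemigroup S]
    (hfg : ∃ X : Finset S, Subsemigroup.closure (X : Set S) = ⊤) :
    SgStronglyMarkov S := by
  intro A _ φ hsurj
  letI : LinearOrder A := LinearOrder.lift' (Fintype.equivFin A) (Fintype.equivFin A).injective
  exact ⟨SgMarkovAux.Lng φ hsurj,
    { regular := SgMarkovAux.Lng_regular φ hsurj
      not_empty_mem := SgMarkovAux.Lng_not_empty_mem φ hsurj
      plus_prefix_closed := SgMarkovAux.Lng_prefix_closed φ hsurj
      unique_rep := SgMarkovAux.Lng_unique_rep φ hsurj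
      min_length := SgMarkovAux.Lng_min_length φ hsurj }⟩
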